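/- (Young's concatenation lemma) Fix ε ∈ (0, 1/2). There exist μ₀ > 1 and θ₀ > 0 such that the following holds for all μ ≥ μ₀. Let C ∈ SL(2,ℝ) with ‖C‖ ≥ μ^m for some m > 0, let A_0, …, A_{n−1} be a μ-hyperbolic sequence (with some bound λ ≥ μ and exponent ε), and write A^n = A_{n−1}⋯A_0. If the angle ∠(s(C^{−1}), s(A^n)) = 2θ with 0 < θ ≤ θ₀, then ‖A^n · C‖ ≥ μ^{(m+n)(1−ε)} · θ. -/
import Mathlib


open Real
open scoped ENNReal

noncomputable section

/-- The operator norm of a `2×2` real matrix acting on Euclidean `ℝ²`. -/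
def mnorm (A : Matrix (Fin 2) (Fin 2) ℝ) : ℝ :=
  ‖Matrix.toEuclideanCLM (𝕜 := ℝ) A‖

/-- Partial products of a sequence of matrices: `blockProd A i = A_{i-1} ⋯ A_1 A_0`. -/
def blockProd (A : ℕ → Matrix (Fin 2) (Fin 2) ℝ) : ℕ → Matrix (Fin 2) (Fin 2) ℝ
  | 0 => 1
  | i + 1 => A i * blockProd A i

/-- The block `A_0, …, A_{n-1}` is `μ`-hyperbolic (with bound `λ` and exponent `ε`):
`‖A_i‖ ≤ λ` for all `i`, `‖A_{i-1}⋯A_0‖ ≥ μ^{i(1-ε)}` for `1 ≤ i ≤ n`, and the same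
two bounds hold for the reversed sequence of inverses `A_{n-1}⁻¹, …, A_0⁻¹`. -/
def IsHypBlock (lam mu eps : ℝ) (n : ℕ) (A : ℕ → Matrix (Fin 2) (Fin 2) ℝ) : Prop :=
  (∀ i < n, mnorm (A i) ≤ lam) ∧
  (∀ i : ℕ, 1 ≤ i → i ≤ n → mu ^ ((i : ℝ) * (1 - eps)) ≤ mnorm (blockProd A i)) ∧
  (∀ i < n, mnorm ((A i)⁻¹) ≤ lam) ∧
  (∀ i : ℕ, 1 ≤ i → i ≤ n →
    mu ^ ((i : ℝ) * (1 - eps)) ≤ mnorm (blockProd (fun j => (A (n - 1 - j))⁻¹) i))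

/-- `v` spans the most contracted direction `s(A)` of `A`: it is a unit vector with
`‖A v‖ = ‖A‖⁻¹`. -/
def IsContractedDir (A : Matrix (Fin 2) (Fin 2) ℝ) (v : EuclideanSpace ℝ (Fin 2)) : Prop :=
  ‖v‖ = 1 ∧ ‖Matrix.toEuclideanCLM (𝕜 := ℝ) A v‖ = (mnorm A)⁻¹

/-- The angle in `[0, π/2]` between the two directions (lines) in `ℝP¹ = ℝ/πℤ` spanned by
the unit vectors `v` and `w`: its sine is `|det [v w]|`. -/
def lineAngle (v w : EuclideanSpace ℝ (Fin 2)) : ℝ :=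
  Real.arcsin |v 0 * w 1 - v 1 * w 0|

/-! ### Auxiliary lemmas -/

lemma yc_clm_apply (A : Matrix (Fin 2) (Fin 2) ℝ) (x : EuclideanSpace ℝ (Fin 2)) (i : Fin 2) :
    (Matrix.toEuclideanCLM (𝕜 := ℝ) A x) i = A i 0 * x 0 + A i 1 * x 1 := by
  have h := congrFun (Matrix.ofLp_toEuclideanCLM (𝕜 := ℝ) A x) i
  simpa [Matrix.toLin'_apply, Matrix.mulVec, dotProduct, Fin.sum_univ_two] using h

lemma yc_norm_sq (x : EuclideanSpace ℝ (Fin 2)) : ‖x‖ ^ 2 = x 0 ^ 2 + x 1 ^ 2 := by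
  rw [EuclideanSpace.norm_eq, Real.sq_sqrt (by positivity)]
  simp [Fin.sum_univ_two, sq_abs]

lemma yc_abs_det_le (v w : EuclideanSpace ℝ (Fin 2)) :
    |v 0 * w 1 - v 1 * w 0| ≤ ‖v‖ * ‖w‖ := by
  have h1 := yc_norm_sq v
  have h2 := yc_norm_sq w
  have key : (v 0 * w 1 - v 1 * w 0) ^ 2 ≤ (‖v‖ * ‖w‖) ^ 2 := by
    rw [mul_pow, h1, h2]; nlinarith [sq_nonneg (v 0 * w 0 + v 1 * w 1)]
  calc |v 0 * w 1 - v 1 * w 0| = Real.sqrt ((v 0 * w 1 - v 1 * w 0) ^ 2) :=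
        (Real.sqrt_sq_eq_abs _).symm
    _ ≤ Real.sqrt ((‖v‖ * ‖w‖) ^ 2) := Real.sqrt_le_sqrt key
    _ = ‖v‖ * ‖w‖ := Real.sqrt_sq (by positivity)

lemma yc_det_rel (B : Matrix (Fin 2) (Fin 2) ℝ) (v w : EuclideanSpace ℝ (Fin 2)) :
    (Matrix.toEuclideanCLM (𝕜 := ℝ) B v) 0 * (Matrix.toEuclideanCLM (𝕜 := ℝ) B w) 1 -
      (Matrix.toEuclideanCLM (𝕜 := ℝ) B v) 1 * (Matrix.toEuclideanCLM (𝕜 := ℝ) B w) 0 =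
      B.det * (v 0 * w 1 - v 1 * w 0) := by
  rw [yc_clm_apply, yc_clm_apply, yc_clm_apply, yc_clm_apply, Matrix.det_fin_two]
  ring

/-- Key lower bound: if `w` is the contracted direction of `B` (with `det B = 1`), then
`‖Bv‖ ≥ ‖B‖ |det(v,w)|`. -/
lemma yc_key (B : Matrix (Fin 2) (Fin 2) ℝ) (hdet : B.det = 1) (hpos : 0 < mnorm B)
    (v w : EuclideanSpace ℝ (Fin 2))
    (hw : ‖Matrix.toEuclideanCLM (𝕜 := ℝ) B w‖ = (mnorm B)⁻¹) :
    mnorm B * |v 0 * w 1 - v 1 * w 0| ≤ ‖Matrix.toEuclideanCLM (𝕜 := ℝ) B v‖ := by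
  set f := Matrix.toEuclideanCLM (𝕜 := ℝ) B
  have h := yc_abs_det_le (f v) (f w)
  rw [yc_det_rel B v w, hdet, one_mul, hw] at h
  have h2 := mul_le_mul_of_nonneg_left h (le_of_lt hpos)
  calc mnorm B * |v 0 * w 1 - v 1 * w 0| ≤ mnorm B * (‖f v‖ * (mnorm B)⁻¹) := h2
    _ = ‖f v‖ := by field_simp

set_option synthInstance.maxHeartbeats 1000000 in
lemma yc_mnorm_one : mnorm 1 = 1 := by
  unfold mnorm; rw [map_one]; exact norm_one

lemma yc_mnorm_mul_le (X Y : Matrix (Fin 2) (Fin 2) ℝ) :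
    mnorm (X * Y) ≤ mnorm X * mnorm Y := by
  unfold mnorm; rw [map_mul]; exact norm_mul_le _ _

set_option synthInstance.maxHeartbeats 1000000 in
set_option maxHeartbeats 2000000 in
lemma yc_mnorm_transpose (C : Matrix (Fin 2) (Fin 2) ℝ) : mnorm C.transpose = mnorm C := by
  have hstar : star C = C.transpose := by
    ext i j; simp [Matrix.star_apply]
  unfold mnorm
  rw [← hstar, map_star, ContinuousLinearMap.star_eq_adjoint]
  exact LinearIsometryEquiv.norm_map ContinuousLinearMap.adjoint (Matrix.toEuclideanCLM (𝕜 := ℝ) C)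

def Jm : Matrix (Fin 2) (Fin 2) ℝ := !![0, -1; 1, 0]

lemma yc_norm_J_apply (S : Matrix (Fin 2) (Fin 2) ℝ)
    (hS : ∀ x : EuclideanSpace ℝ (Fin 2),
      (Matrix.toEuclideanCLM (𝕜 := ℝ) S x) 0 ^ 2 + (Matrix.toEuclideanCLM (𝕜 := ℝ) S x) 1 ^ 2
        = x 0 ^ 2 + x 1 ^ 2) : mnorm S ≤ 1 := by
  apply ContinuousLinearMap.opNorm_le_bound _ zero_le_one
  intro x
  rw [one_mul]
  have h : ‖Matrix.toEuclideanCLM (𝕜 := ℝ) S x‖ ^ 2 = ‖x‖ ^ 2 := by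
    rw [yc_norm_sq, yc_norm_sq, hS]
  have heq : ‖Matrix.toEuclideanCLM (𝕜 := ℝ) S x‖ = ‖x‖ := by
    calc ‖Matrix.toEuclideanCLM (𝕜 := ℝ) S x‖
        = Real.sqrt (‖Matrix.toEuclideanCLM (𝕜 := ℝ) S x‖ ^ 2) :=
          (Real.sqrt_sq (norm_nonneg _)).symm
      _ = Real.sqrt (‖x‖ ^ 2) := by rw [h]
      _ = ‖x‖ := Real.sqrt_sq (norm_nonneg _)
  exact le_of_eq heq

lemma yc_mnorm_J : mnorm Jm ≤ 1 := by
  apply yc_norm_J_apply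
  intro x
  rw [yc_clm_apply, yc_clm_apply]
  norm_num [Jm]
  ring

lemma yc_mnorm_negJ : mnorm (-Jm) ≤ 1 := by
  apply yc_norm_J_apply
  intro x
  rw [yc_clm_apply, yc_clm_apply]
  norm_num [Jm]
  ring

lemma yc_inv_eq (C : Matrix (Fin 2) (Fin 2) ℝ) (hdet : C.det = 1) :
    C⁻¹ = Jm * C.transpose * (-Jm) := by
  apply Matrix.inv_eq_right_inv
  rw [Matrix.det_fin_two] at hdet
  ext i j
  fin_cases i <;> fin_cases j <;>
    simp [Jm, Matrix.mul_apply, Matrix.vecMul, dotProduct, Fin.sum_univ_two,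
      Matrix.one_apply] <;> linarith

lemma yc_transpose_eq (C : Matrix (Fin 2) (Fin 2) ℝ) (hdet : C.det = 1) :
    C.transpose = (-Jm) * C⁻¹ * Jm := by
  rw [yc_inv_eq C hdet]
  have h1 : (-Jm) * Jm = 1 := by
    ext i j; fin_cases i <;> fin_cases j <;>
      simp [Jm, Matrix.mul_apply, Matrix.vecMul, dotProduct, Fin.sum_univ_two,
        Matrix.one_apply]
  calc C.transpose = 1 * C.transpose * 1 := by rw [one_mul, mul_one]
    _ = ((-Jm) * Jm) * C.transpose * ((-Jm) * Jm) := by rw [h1]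
    _ = (-Jm) * (Jm * C.transpose * (-Jm)) * Jm := by noncomm_ring

lemma yc_mnorm_inv (C : Matrix (Fin 2) (Fin 2) ℝ) (hdet : C.det = 1) :
    mnorm C ≤ mnorm C⁻¹ := by
  have hm : 0 ≤ mnorm C⁻¹ := norm_nonneg _
  calc mnorm C = mnorm C.transpose := (yc_mnorm_transpose C).symm
    _ = mnorm ((-Jm) * C⁻¹ * Jm) := by rw [yc_transpose_eq C hdet]
    _ ≤ mnorm ((-Jm) * C⁻¹) * mnorm Jm := yc_mnorm_mul_le _ _
    _ ≤ (mnorm (-Jm) * mnorm C⁻¹) * mnorm Jm := by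
        apply mul_le_mul_of_nonneg_right (yc_mnorm_mul_le _ _) (norm_nonneg _)
    _ ≤ (1 * mnorm C⁻¹) * 1 := by
        apply mul_le_mul (mul_le_mul_of_nonneg_right yc_mnorm_negJ hm) yc_mnorm_J
          (norm_nonneg _) (by positivity)
    _ = mnorm C⁻¹ := by ring

lemma yc_det_blockProd (A : ℕ → Matrix (Fin 2) (Fin 2) ℝ) (n : ℕ)
    (h : ∀ i < n, (A i).det = 1) : (blockProd A n).det = 1 := by
  induction n with
  | zero => simp [blockProd]
  | succ k ih =>
      rw [blockProd, Matrix.det_mul, h k (Nat.lt_succ_self k),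
        ih (fun i hi => h i (Nat.lt_succ_of_lt hi)), one_mul]

set_option maxHeartbeats 2000000 in
set_option synthInstance.maxHeartbeats 1000000 in
/-- **Young's concatenation lemma** (Lemma 2.2).  Fix `ε ∈ (0, 1/2)`.  There are `μ₀ > 1`
and `θ₀ > 0` such that for all `μ ≥ μ₀`: if `‖C‖ ≥ μ^m` with `m > 0`, the block
`A_0, …, A_{n-1}` is `μ`-hyperbolic, and the angle `∠(s(C⁻¹), s(A^n)) = 2θ` with
`0 < θ ≤ θ₀`, then `‖A^n C‖ ≥ μ^{(m+n)(1-ε)} θ`. -/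
theorem young_concatenation (eps : ℝ) (heps : 0 < eps) (heps' : eps < 1 / 2) :
    ∃ μ₀ > (1 : ℝ), ∃ θ₀ > (0 : ℝ), ∀ mu ≥ μ₀, ∀ lam ≥ mu,
      ∀ (m : ℝ), 0 < m →
      ∀ (n : ℕ) (C : Matrix (Fin 2) (Fin 2) ℝ), C.det = 1 →
        mu ^ m ≤ mnorm C →
      ∀ (A : ℕ → Matrix (Fin 2) (Fin 2) ℝ), (∀ i < n, (A i).det = 1) →
        IsHypBlock lam mu eps n A →
      ∀ (θ : ℝ) (v w : EuclideanSpace ℝ (Fin 2)),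
        IsContractedDir C⁻¹ v → IsContractedDir (blockProd A n) w →
        0 < θ → θ ≤ θ₀ → lineAngle v w = 2 * θ →
        mu ^ ((m + (n : ℝ)) * (1 - eps)) * θ ≤ mnorm (blockProd A n * C) := by
  refine ⟨2, one_lt_two, 1, one_pos, ?_⟩
  intro mu hmu lam hlam m hm n C hCdet hCnorm A hAdet hblk θ v w hv hw hθ hθ' hangle
  obtain ⟨hv1, hv2⟩ := hv
  obtain ⟨hw1, hw2⟩ := hw
  have hmu1 : (1 : ℝ) < mu := lt_of_lt_of_le one_lt_two hmu
  have hmu0 : (0 : ℝ) < mu := lt_trans one_pos hmu1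
  -- determinant of the block product
  have hBdet : (blockProd A n).det = 1 := yc_det_blockProd A n hAdet
  -- lower bound on the norm of the block product
  have hBn : mu ^ ((n : ℝ) * (1 - eps)) ≤ mnorm (blockProd A n) := by
    cases n with
    | zero => simp [blockProd, yc_mnorm_one]
    | succ k => exact hblk.2.1 (k + 1) (Nat.succ_le_succ (Nat.zero_le k)) le_rfl
  have hBpos : 0 < mnorm (blockProd A n) :=
    lt_of_lt_of_le (Real.rpow_pos_of_pos hmu0 _) hBn
  have hB1 : 1 ≤ mnorm (blockProd A n) := by
    refine le_trans ?_ hBn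
    have hn0 : (0:ℝ) ≤ (n:ℝ) := Nat.cast_nonneg n
    calc (1:ℝ) = mu ^ (0:ℝ) := (Real.rpow_zero mu).symm
      _ ≤ mu ^ ((n : ℝ) * (1 - eps)) :=
          Real.rpow_le_rpow_of_exponent_le hmu1.le (by nlinarith)
  -- norms of C
  have hCpos : 0 < mnorm C := lt_of_lt_of_le (Real.rpow_pos_of_pos hmu0 m) hCnorm
  have hCinv : mnorm C ≤ mnorm C⁻¹ := yc_mnorm_inv C hCdet
  have hCinvpos : 0 < mnorm C⁻¹ := lt_of_lt_of_le hCpos hCinv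
  -- the angle
  set d : ℝ := v 0 * w 1 - v 1 * w 0 with hd
  have habs : |d| ≤ 1 := by
    have := yc_abs_det_le v w
    rwa [hv1, hw1, one_mul] at this
  have hsin : |d| = Real.sin (2 * θ) := by
    have h := Real.sin_arcsin (le_trans (by norm_num) (abs_nonneg d)) habs
    rw [← hangle, lineAngle, h]
  have h2θ : 2 * θ ≤ π / 2 := by
    rw [← hangle]; exact Real.arcsin_le_pi_div_two _
  have hθd : θ ≤ |d| := by
    have hms := Real.mul_le_sin (x := 2 * θ) (by linarith) h2θ
    have hpi4 : π ≤ 4 := by nlinarith [Real.pi_lt_d2]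
    have hpos := Real.pi_pos
    rw [hsin]
    have h1 : θ ≤ 2 / π * (2 * θ) := by
      rw [div_mul_eq_mul_div, le_div_iff₀ hpos]
      nlinarith
    linarith
  -- key bound for the block product
  have hKey : mnorm (blockProd A n) * |d| ≤
      ‖Matrix.toEuclideanCLM (𝕜 := ℝ) (blockProd A n) v‖ :=
    yc_key (blockProd A n) hBdet hBpos v w hw2
  -- construct the unit vector x with C x = ‖C⁻¹‖ v
  have hCunit : IsUnit C.det := by rw [hCdet]; exact isUnit_one
  have hCC : C * C⁻¹ = 1 := Matrix.mul_nonsing_inv C hCunit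
  set y : EuclideanSpace ℝ (Fin 2) := Matrix.toEuclideanCLM (𝕜 := ℝ) C⁻¹ v with hy
  have hynorm : ‖y‖ = (mnorm C⁻¹)⁻¹ := hv2
  have hypos : 0 < ‖y‖ := by rw [hynorm]; exact inv_pos.mpr hCinvpos
  set x : EuclideanSpace ℝ (Fin 2) := ‖y‖⁻¹ • y with hx
  have hxnorm : ‖x‖ = 1 := by
    rw [hx, norm_smul, norm_inv, norm_norm]
    field_simp
  have hfy : Matrix.toEuclideanCLM (𝕜 := ℝ) C y = v := by
    rw [hy]
    have h := congrFun (congrArg DFunLike.coe (map_mul (Matrix.toEuclideanCLM (𝕜 := ℝ)) C C⁻¹)) v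
    rw [ContinuousLinearMap.mul_apply] at h
    rw [← h, hCC, map_one, ContinuousLinearMap.one_apply]
  have happ : Matrix.toEuclideanCLM (𝕜 := ℝ) (blockProd A n * C) x =
      ‖y‖⁻¹ • Matrix.toEuclideanCLM (𝕜 := ℝ) (blockProd A n) v := by
    have h := congrFun (congrArg DFunLike.coe
      (map_mul (Matrix.toEuclideanCLM (𝕜 := ℝ)) (blockProd A n) C)) x
    rw [ContinuousLinearMap.mul_apply] at h
    rw [h, hx, map_smul, hfy, map_smul]
  have hlast : mnorm C⁻¹ * ‖Matrix.toEuclideanCLM (𝕜 := ℝ) (blockProd A n) v‖ ≤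
      mnorm (blockProd A n * C) := by
    have h := ContinuousLinearMap.unit_le_opNorm
      (Matrix.toEuclideanCLM (𝕜 := ℝ) (blockProd A n * C)) x (le_of_eq hxnorm)
    rw [happ, norm_smul, norm_inv, norm_norm, hynorm, inv_inv] at h
    exact h
  -- the rpow estimate
  have hsplit : mu ^ ((m + (n : ℝ)) * (1 - eps)) ≤ mu ^ m * mu ^ ((n : ℝ) * (1 - eps)) := by
    have he : (m + (n : ℝ)) * (1 - eps) = m * (1 - eps) + (n : ℝ) * (1 - eps) := by ring
    rw [he, Real.rpow_add hmu0]
    apply mul_le_mul_of_nonneg_right _ (le_of_lt (Real.rpow_pos_of_pos hmu0 _))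
    exact Real.rpow_le_rpow_of_exponent_le hmu1.le (by nlinarith)
  -- assemble
  have hdnn : (0 : ℝ) ≤ |d| := abs_nonneg d
  calc mu ^ ((m + (n : ℝ)) * (1 - eps)) * θ
      ≤ (mu ^ m * mu ^ ((n : ℝ) * (1 - eps))) * θ :=
        mul_le_mul_of_nonneg_right hsplit hθ.le
    _ ≤ (mnorm C * mnorm (blockProd A n)) * |d| := by
        apply mul_le_mul (mul_le_mul hCnorm hBn
          (le_of_lt (Real.rpow_pos_of_pos hmu0 _)) hCpos.le) hθd hθ.le
        positivity
    _ = mnorm C * (mnorm (blockProd A n) * |d|) := by ring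
    _ ≤ mnorm C⁻¹ * ‖Matrix.toEuclideanCLM (𝕜 := ℝ) (blockProd A n) v‖ := by
        exact mul_le_mul hCinv hKey (mul_nonneg hBpos.le hdnn) hCinvpos.le
    _ ≤ mnorm (blockProd A n * C) := hlast

end
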